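/- arXiv:2509.09566 — 3 statements merged into one kernel-verified Lean document; each statement's English description precedes it below -/
import Mathlib

section
/- Let m : ℝ^d → (0,∞) be a smooth positive density, E, S : ℝ^d → ℝ smooth, J : ℝ^d → Mat(d,ℝ) smooth with J(x) antisymmetric and J(x)∇S(x) = 0 for all x, and K : ℝ^d → Mat(d,ℝ) smooth with K(x) symmetric and K(x)∇E(x) = 0 for all x. Assume the unimodularity condition: div(m J∇g) = 0 on ℝ^d for every smooth g. Then for every smooth h : ℝ → ℝ and every smooth compactly supported f : ℝ^d → ℝ, ∫_{ℝ^d} [⟨∇E, J∇f⟩ + ⟨∇S, K∇f⟩ + div_m(K∇f)](x) · h(E(x)) e^{S(x)} m(x) dx = 0. That is, every measure of the form h(E) e^{S} m dx annihilates the generator L of the GENERIC SDE, so all such measures are invariant. -/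
open MeasureTheory Real Matrix

/-- Gradient of `f : ℝ^d → ℝ` w.r.t. the standard inner product. -/
noncomputable def grad {d : ℕ} (f : (Fin d → ℝ) → ℝ) (x : Fin d → ℝ) : Fin d → ℝ :=
  fun i => fderiv ℝ f x (Pi.single i 1)

/-- Partial derivative `∂_{x_k} g (x)`. -/
noncomputable def pd {d : ℕ} (k : Fin d) (g : (Fin d → ℝ) → ℝ) (x : Fin d → ℝ) : ℝ :=
  fderiv ℝ g x (Pi.single k 1)

/-- Divergence of a vector field on ℝ^d: `div X = Σ_k ∂_{x_k} X_k`. -/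
noncomputable def vdiv {d : ℕ} (X : (Fin d → ℝ) → (Fin d → ℝ)) (x : Fin d → ℝ) : ℝ :=
  ∑ k, fderiv ℝ (fun y => X y k) x (Pi.single k 1)

section Aux

variable {d : ℕ}

/-- Components of the (full) derivative of a smooth function are smooth. -/
lemma grad_eq {f : (Fin d → ℝ) → ℝ} {x : Fin d → ℝ} :
    grad f x = fun i => fderiv ℝ f x (Pi.single i 1) := rfl

lemma one_le_itop : ((⊤ : ℕ∞) : WithTop ℕ∞) ≠ 0 := by
  simp

lemma contDiff_fderiv_apply {g : (Fin d → ℝ) → ℝ} (hg : ContDiff ℝ (⊤ : ℕ∞) g)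
    (v : Fin d → ℝ) : ContDiff ℝ (⊤ : ℕ∞) (fun y => fderiv ℝ g y v) :=
  (hg.fderiv_right le_rfl).clm_apply contDiff_const

/-- Components of a smooth matrix field applied to a smooth vector field are smooth. -/
lemma contDiff_mulVec {M : (Fin d → ℝ) → Matrix (Fin d) (Fin d) ℝ}
    {v : (Fin d → ℝ) → Fin d → ℝ}
    (hM : ∀ i j, ContDiff ℝ (⊤ : ℕ∞) fun x => M x i j)
    (hv : ∀ j, ContDiff ℝ (⊤ : ℕ∞) fun x => v x j) (k : Fin d) :
    ContDiff ℝ (⊤ : ℕ∞) fun x => (M x).mulVec (v x) k := by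
  simp only [Matrix.mulVec, dotProduct]
  exact ContDiff.sum fun j _ => (hM k j).mul (hv j)

/-- A smooth compactly supported function is Lipschitz. -/
lemma lipschitz_of_contDiff_compactSupport {g : (Fin d → ℝ) → ℝ}
    (hg : ContDiff ℝ (⊤ : ℕ∞) g) (hgc : HasCompactSupport g) :
    ∃ C : NNReal, LipschitzWith C g := by
  obtain ⟨C, hC⟩ : ∃ C, ∀ x, ‖fderiv ℝ g x‖ ≤ C :=
    ((hg.fderiv_right (m := ((⊤ : ℕ∞) : WithTop ℕ∞)) le_rfl).continuous).bounded_above_of_compact_support (hgc.fderiv ℝ)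
  refine ⟨C.toNNReal, lipschitzWith_of_nnnorm_fderiv_le (hg.differentiable one_le_itop) fun x => ?_⟩
  rw [← NNReal.coe_le_coe]
  simp only [coe_nnnorm, Real.coe_toNNReal']
  exact le_max_of_le_left (hC x)

/-- The integral of a directional derivative of a smooth compactly supported
function vanishes. -/
lemma integral_fderiv_apply_eq_zero {g : (Fin d → ℝ) → ℝ}
    (hg : ContDiff ℝ (⊤ : ℕ∞) g) (hgc : HasCompactSupport g) (v : Fin d → ℝ) :
    ∫ x, fderiv ℝ g x v = 0 := by
  obtain ⟨C, hC⟩ := lipschitz_of_contDiff_compactSupport hg hgc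
  have h1 := LipschitzWith.integral_lineDeriv_mul_eq (μ := volume)
    (LipschitzWith.const (b := (1 : ℝ))) hC hgc (-v)
  have hlc : ∀ x : Fin d → ℝ, lineDeriv ℝ (fun _ : Fin d → ℝ => (1 : ℝ)) x (-v) = 0 :=
    fun x => by simp [lineDeriv]
  simp only [hlc, zero_mul, integral_zero, neg_neg, mul_one] at h1
  have h2 : ∀ x, lineDeriv ℝ g x v = fderiv ℝ g x v := fun x =>
    ((hg.differentiable one_le_itop) x).lineDeriv_eq_fderiv
  rw [← integral_congr_ae (Filter.Eventually.of_forall h2), ← h1]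

end Aux

/-- every measure of the form `h(E) e^S m dx` annihilates the GENERIC
generator `Lf = ⟨∇E, J∇f⟩ + ⟨∇S, K∇f⟩ + div_m(K∇f)`, hence is invariant. -/
theorem invariance_of_hE_expS_measures {d : ℕ}
    (m : (Fin d → ℝ) → ℝ) (E S : (Fin d → ℝ) → ℝ)
    (J K : (Fin d → ℝ) → Matrix (Fin d) (Fin d) ℝ)
    (hm : ContDiff ℝ (⊤ : ℕ∞) m) (hmpos : ∀ x, 0 < m x)
    (hE : ContDiff ℝ (⊤ : ℕ∞) E) (hS : ContDiff ℝ (⊤ : ℕ∞) S)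
    (hJ : ∀ i j, ContDiff ℝ (⊤ : ℕ∞) fun x => J x i j)
    (hK : ∀ i j, ContDiff ℝ (⊤ : ℕ∞) fun x => K x i j)
    (hJanti : ∀ x, (J x)ᵀ = -J x)
    (hJS : ∀ x, (J x).mulVec (grad S x) = 0)
    (hKsym : ∀ x, (K x)ᵀ = K x)
    (hKE : ∀ x, (K x).mulVec (grad E x) = 0)
    (huni : ∀ g : (Fin d → ℝ) → ℝ, ContDiff ℝ (⊤ : ℕ∞) g →
      ∀ x, vdiv (fun y k => m y * (J y).mulVec (grad g y) k) x = 0)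
    (h : ℝ → ℝ) (hh : ContDiff ℝ (⊤ : ℕ∞) h)
    (f : (Fin d → ℝ) → ℝ)
    (hf : ContDiff ℝ (⊤ : ℕ∞) f) (hfc : HasCompactSupport f) :
    ∫ x, (grad E x ⬝ᵥ (J x).mulVec (grad f x)
          + grad S x ⬝ᵥ (K x).mulVec (grad f x)
          + vdiv (fun y k => m y * (K y).mulVec (grad f y) k) x / m x)
        * (h (E x) * Real.exp (S x) * m x) = 0 := by
  classical
  -- basic smoothness facts
  have hexpS : ContDiff ℝ (⊤ : ℕ∞) fun y => Real.exp (S y) := Real.contDiff_exp.comp hS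
  have hhE : ContDiff ℝ (⊤ : ℕ∞) fun y => h (E y) := hh.comp hE
  have hgradf : ∀ j, ContDiff ℝ (⊤ : ℕ∞) fun y => fderiv ℝ f y (Pi.single j 1) :=
    fun j => contDiff_fderiv_apply hf _
  have hgradE : ∀ j, ContDiff ℝ (⊤ : ℕ∞) fun y => fderiv ℝ E y (Pi.single j 1) :=
    fun j => contDiff_fderiv_apply hE _
  have hWc : ∀ k, ContDiff ℝ (⊤ : ℕ∞)
      fun y => m y * (K y).mulVec (fun i => fderiv ℝ f y (Pi.single i 1)) k :=
    fun k => hm.mul (contDiff_mulVec hK hgradf k)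
  have hVc : ∀ k, ContDiff ℝ (⊤ : ℕ∞)
      fun y => m y * (h (E y) * (J y).mulVec (fun i => fderiv ℝ E y (Pi.single i 1)) k) :=
    fun k => hm.mul (hhE.mul (contDiff_mulVec hJ hgradE k))
  -- the compactly supported smooth field `Z`
  set Z : (Fin d → ℝ) → Fin d → ℝ := fun y k =>
      (h (E y) * Real.exp (S y))
        * (m y * (K y).mulVec (fun i => fderiv ℝ f y (Pi.single i 1)) k)
      - (f y * Real.exp (S y))
        * (m y * (h (E y) * (J y).mulVec (fun i => fderiv ℝ E y (Pi.single i 1)) k))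
    with hZdef
  have hZc : ∀ k, ContDiff ℝ (⊤ : ℕ∞) fun y => Z y k := fun k =>
    ((hhE.mul hexpS).mul (hWc k)).sub ((hf.mul hexpS).mul (hVc k))
  have hZsupp : ∀ k, HasCompactSupport fun y => Z y k := by
    intro k
    apply HasCompactSupport.intro hfc
    intro y hy
    have hf0 : f y = 0 := image_eq_zero_of_notMem_tsupport hy
    have hfd0 : fderiv ℝ f y = 0 := by
      have hev : f =ᶠ[nhds y] 0 := notMem_tsupport_iff_eventuallyEq.mp hy
      rw [hev.fderiv_eq]
      exact fderiv_const_apply 0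
    have hv0 : (fun i => fderiv ℝ f y (Pi.single i 1)) = (0 : Fin d → ℝ) := by
      funext i; rw [hfd0]; rfl
    simp only [hZdef, hf0, hv0, Matrix.mulVec_zero, Pi.zero_apply, mul_zero, zero_mul,
      sub_zero, zero_sub, neg_eq_zero]
  -- antiderivative of h
  set H : ℝ → ℝ := fun t => ∫ s in (0 : ℝ)..t, h s with hHdef
  have hHderiv : ∀ t, HasDerivAt H (h t) t := fun t =>
    ((hh.continuous).integral_hasStrictDerivAt 0 t).hasDerivAt
  have hHsmooth : ContDiff ℝ (⊤ : ℕ∞) H := by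
    rw [contDiff_infty_iff_deriv]
    refine ⟨fun t => (hHderiv t).differentiableAt, ?_⟩
    have : deriv H = h := funext fun t => (hHderiv t).deriv
    rw [this]; exact hh
  -- unimodularity applied to H ∘ E
  have hgradHE : ∀ y, grad (fun z => H (E z)) y
      = fun i => h (E y) * fderiv ℝ E y (Pi.single i 1) := by
    intro y
    funext i
    have h1 : HasFDerivAt (fun z => H (E z)) ((h (E y)) • fderiv ℝ E y) y := by
      exact (hHderiv (E y)).comp_hasFDerivAt y
        ((hE.differentiable one_le_itop) y).hasFDerivAt
    show fderiv ℝ (fun z => H (E z)) y (Pi.single i 1) = _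
    rw [h1.fderiv]
    simp
  have hV0 : ∀ x, vdiv (fun y k =>
      m y * (h (E y) * (J y).mulVec (fun i => fderiv ℝ E y (Pi.single i 1)) k)) x = 0 := by
    intro x
    have h1 := huni (fun z => H (E z)) (hHsmooth.comp hE) x
    have h2 : (fun y k => m y * (J y).mulVec (grad (fun z => H (E z)) y) k)
        = fun y k => m y * (h (E y) * (J y).mulVec (fun i => fderiv ℝ E y (Pi.single i 1)) k) := by
      funext y k
      rw [hgradHE y]
      have : (fun i => h (E y) * fderiv ℝ E y (Pi.single i 1))
          = h (E y) • fun i => fderiv ℝ E y (Pi.single i 1) := rfl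
      rw [this, Matrix.mulVec_smul]
      simp [mul_assoc]
    rwa [h2] at h1
  -- pointwise identity: the integrand is the divergence of Z
  have key : ∀ x,
      (grad E x ⬝ᵥ (J x).mulVec (grad f x)
        + grad S x ⬝ᵥ (K x).mulVec (grad f x)
        + vdiv (fun y k => m y * (K y).mulVec (grad f y) k) x / m x)
        * (h (E x) * Real.exp (S x) * m x) = vdiv Z x := by
    intro x
    have I1 : grad E x ⬝ᵥ (K x).mulVec (grad f x) = 0 := by
      rw [Matrix.dotProduct_mulVec, ← Matrix.mulVec_transpose, hKsym x, hKE x,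
        zero_dotProduct]
    have I2 : grad S x ⬝ᵥ (J x).mulVec (grad E x) = 0 := by
      rw [Matrix.dotProduct_mulVec, ← Matrix.mulVec_transpose, hJanti x,
        Matrix.neg_mulVec, hJS x, neg_zero, zero_dotProduct]
    have I3 : grad f x ⬝ᵥ (J x).mulVec (grad E x)
        = -(grad E x ⬝ᵥ (J x).mulVec (grad f x)) := by
      rw [Matrix.dotProduct_mulVec, ← Matrix.mulVec_transpose, hJanti x,
        Matrix.neg_mulVec, neg_dotProduct, dotProduct_comm]
    have hsum : vdiv Z x =
        deriv h (E x) * Real.exp (S x) * m x * (grad E x ⬝ᵥ (K x).mulVec (grad f x))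
        + h (E x) * Real.exp (S x) * m x * (grad S x ⬝ᵥ (K x).mulVec (grad f x))
        + h (E x) * Real.exp (S x)
            * vdiv (fun y k => m y * (K y).mulVec (grad f y) k) x
        - (Real.exp (S x) * m x * h (E x) * (grad f x ⬝ᵥ (J x).mulVec (grad E x))
          + f x * Real.exp (S x) * m x * h (E x) * (grad S x ⬝ᵥ (J x).mulVec (grad E x))
          + f x * Real.exp (S x)
              * vdiv (fun y k =>
                  m y * (h (E y) * (J y).mulVec (fun i => fderiv ℝ E y (Pi.single i 1)) k)) x) := by
      simp only [hZdef, vdiv, grad_eq, dotProduct, Finset.mul_sum,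
        ← Finset.sum_add_distrib, ← Finset.sum_sub_distrib]
      refine Finset.sum_congr rfl fun k _ => ?_
      have HE : HasFDerivAt E (fderiv ℝ E x) x := ((hE.differentiable one_le_itop) x).hasFDerivAt
      have HS : HasFDerivAt S (fderiv ℝ S x) x := ((hS.differentiable one_le_itop) x).hasFDerivAt
      have Hf : HasFDerivAt f (fderiv ℝ f x) x := ((hf.differentiable one_le_itop) x).hasFDerivAt
      have HhE : HasFDerivAt (fun y => h (E y)) (deriv h (E x) • fderiv ℝ E x) x :=
        (((hh.differentiable one_le_itop) (E x)).hasDerivAt).comp_hasFDerivAt x HE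
      have Hexp : HasFDerivAt (fun y => Real.exp (S y))
          (Real.exp (S x) • fderiv ℝ S x) x :=
        (Real.hasDerivAt_exp (S x)).comp_hasFDerivAt x HS
      have HW : HasFDerivAt
          (fun y => m y * (K y).mulVec (fun i => fderiv ℝ f y (Pi.single i 1)) k)
          (fderiv ℝ (fun y => m y * (K y).mulVec (fun i => fderiv ℝ f y (Pi.single i 1)) k) x)
          x := (((hWc k).differentiable one_le_itop) x).hasFDerivAt
      have HV : HasFDerivAt
          (fun y => m y * (h (E y) * (J y).mulVec (fun i => fderiv ℝ E y (Pi.single i 1)) k))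
          (fderiv ℝ (fun y =>
            m y * (h (E y) * (J y).mulVec (fun i => fderiv ℝ E y (Pi.single i 1)) k)) x)
          x := (((hVc k).differentiable one_le_itop) x).hasFDerivAt
      have HZk := ((HhE.mul Hexp).mul HW).sub ((Hf.mul Hexp).mul HV)
      rw [HasFDerivAt.fderiv (f := fun y =>
        h (E y) * Real.exp (S y) * (m y * (K y).mulVec (fun i => fderiv ℝ f y (Pi.single i 1)) k)
          - f y * Real.exp (S y)
            * (m y * (h (E y) * (J y).mulVec (fun i => fderiv ℝ E y (Pi.single i 1)) k))) HZk]
      simp only [ContinuousLinearMap.coe_sub', Pi.sub_apply, ContinuousLinearMap.add_apply,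
        ContinuousLinearMap.coe_smul', Pi.smul_apply, smul_eq_mul, Pi.mul_apply]
      ring
    have hm0 : m x ≠ 0 := ne_of_gt (hmpos x)
    rw [hsum, I1, I2, I3, hV0 x]
    field_simp
    ring
  -- integrate
  rw [integral_congr_ae (Filter.Eventually.of_forall key)]
  have hZint : ∀ k, Integrable (fun x => fderiv ℝ (fun y => Z y k) x (Pi.single k 1)) volume := by
    intro k
    apply Continuous.integrable_of_hasCompactSupport
    · exact (contDiff_fderiv_apply (hZc k) _).continuous
    · exact (hZsupp k).fderiv_apply ℝ (Pi.single k 1)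
  have : (∫ x, vdiv Z x)
      = ∑ k, ∫ x, fderiv ℝ (fun y => Z y k) x (Pi.single k 1) := by
    simp only [vdiv]
    exact integral_finset_sum Finset.univ fun k _ => hZint k
  rw [this]
  refine Finset.sum_eq_zero fun k _ => ?_
  exact integral_fderiv_apply_eq_zero (hZc k) (hZsupp k) (Pi.single k 1)
end

section
/- Let E, S : ℝ^d → ℝ be smooth, J : ℝ^d → Mat(d,ℝ) smooth with J(x) antisymmetric and J(x)∇S(x) = 0 for all x, and K : ℝ^d → Mat(d,ℝ) smooth with K(x) symmetric and K(x)∇E(x) = 0 for all x. Assume div J = 0, i.e. Σ_k ∂_{x_k} J_{jk}(x) = 0 for every j and x. Then the measure e^{S(x)} dx is stationary for the GENERIC SDE: for every smooth compactly supported f : ℝ^d → ℝ, ∫_{ℝ^d} [⟨∇f, J∇E⟩ + ⟨∇f, K∇S⟩ + div(K∇f)](x) e^{S(x)} dx = 0. -/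
open MeasureTheory Real Matrix

section Helpers

variable {d : ℕ}

lemma grad_eq_pd (u : (Fin d → ℝ) → ℝ) (x : Fin d → ℝ) (k : Fin d) :
    grad u x k = pd k u x := rfl

lemma contDiff_pd (k : Fin d) {g : (Fin d → ℝ) → ℝ} (hg : ContDiff ℝ (⊤ : ℕ∞) g) :
    ContDiff ℝ (⊤ : ℕ∞) (pd k g) :=
  (hg.fderiv_right (m := (⊤:ℕ∞)) le_rfl).clm_apply contDiff_const

lemma integral_pd_eq_zero {g : (Fin d → ℝ) → ℝ} (hg : ContDiff ℝ (⊤ : ℕ∞) g)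
    (hgc : HasCompactSupport g) (k : Fin d) :
    ∫ x, pd k g x = 0 := by
  have hd : Differentiable ℝ g := hg.differentiable (by simp)
  have hcont : Continuous fun x => fderiv ℝ g x (Pi.single k 1) :=
    ((hg.fderiv_right (m := (⊤:ℕ∞)) le_rfl).clm_apply contDiff_const).continuous
  have hsupp : HasCompactSupport fun x => fderiv ℝ g x (Pi.single k 1) :=
    hgc.fderiv_apply ℝ (Pi.single k 1)
  have h1 : Integrable (fun x => fderiv ℝ (fun _ => (1:ℝ)) x (Pi.single k 1) * g x) := by
    simp
  have h2 : Integrable (fun x => (1:ℝ) * fderiv ℝ g x (Pi.single k 1)) := by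
    simpa using hcont.integrable_of_hasCompactSupport hsupp
  have h3 : Integrable (fun x => (1:ℝ) * g x) := by
    simpa using (hg.continuous).integrable_of_hasCompactSupport hgc
  have := integral_mul_fderiv_eq_neg_fderiv_mul_of_integrable h1 h2 h3
    (fun x _ => differentiableAt_const (1:ℝ)) (fun x _ => hd x)
  simp only [one_mul] at this
  simp only [pd]
  rw [this]
  simp

lemma pd_mul {u v : (Fin d → ℝ) → ℝ} {x : Fin d → ℝ} (k : Fin d)
    (hu : DifferentiableAt ℝ u x) (hv : DifferentiableAt ℝ v x) :
    pd k (fun y => u y * v y) x = pd k u x * v x + u x * pd k v x := by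
  simp only [pd, fderiv_fun_mul hu hv, ContinuousLinearMap.add_apply,
    ContinuousLinearMap.smul_apply, smul_eq_mul]
  ring

lemma pd_add {u v : (Fin d → ℝ) → ℝ} {x : Fin d → ℝ} (k : Fin d)
    (hu : DifferentiableAt ℝ u x) (hv : DifferentiableAt ℝ v x) :
    pd k (fun y => u y + v y) x = pd k u x + pd k v x := by
  simp only [pd, fderiv_fun_add hu hv, ContinuousLinearMap.add_apply]

lemma pd_sum {ι : Type*} (s : Finset ι) {u : ι → (Fin d → ℝ) → ℝ} {x : Fin d → ℝ} (k : Fin d)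
    (hu : ∀ i ∈ s, DifferentiableAt ℝ (u i) x) :
    pd k (fun y => ∑ i ∈ s, u i y) x = ∑ i ∈ s, pd k (u i) x := by
  simp only [pd, fderiv_fun_sum hu, ContinuousLinearMap.sum_apply]

lemma pd_exp {u : (Fin d → ℝ) → ℝ} {x : Fin d → ℝ} (k : Fin d)
    (hu : DifferentiableAt ℝ u x) :
    pd k (fun y => Real.exp (u y)) x = Real.exp (u x) * pd k u x := by
  simp only [pd, fderiv_exp hu, ContinuousLinearMap.smul_apply, smul_eq_mul]

lemma pd_neg {u : (Fin d → ℝ) → ℝ} {x : Fin d → ℝ} (k : Fin d) :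
    pd k (fun y => -(u y)) x = -(pd k u x) := by
  simp only [pd, fderiv_fun_neg, ContinuousLinearMap.neg_apply]

lemma pd_pd_symm {u : (Fin d → ℝ) → ℝ} (hu : ContDiff ℝ (⊤ : ℕ∞) u) (j k : Fin d)
    (x : Fin d → ℝ) : pd j (pd k u) x = pd k (pd j u) x := by
  have hdu : Differentiable ℝ u := hu.differentiable (by simp)
  have hdd : DifferentiableAt ℝ (fderiv ℝ u) x :=
    ((hu.fderiv_right (m := (⊤:ℕ∞)) le_rfl).differentiable (by simp)) x
  have hrw : ∀ (w v : Fin d → ℝ),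
      fderiv ℝ (fun y => fderiv ℝ u y w) x v = fderiv ℝ (fderiv ℝ u) x v w := by
    intro w v
    rw [fderiv_clm_apply hdd (differentiableAt_const w)]
    simp
  have hsymm := second_derivative_symmetric (f := u) (fun y => (hdu y).hasFDerivAt)
    hdd.hasFDerivAt (Pi.single j 1) (Pi.single k 1)
  show fderiv ℝ (fun y => fderiv ℝ u y (Pi.single k 1)) x (Pi.single j 1)
      = fderiv ℝ (fun y => fderiv ℝ u y (Pi.single j 1)) x (Pi.single k 1)
  rw [hrw, hrw, hsymm]

end Helpers

/-- if `div J = 0` (row-wise), then the measure `e^S dx` is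
stationary for the GENERIC SDE: `∫ (Lf) e^S dx = 0` for all `f ∈ C_c^∞`, where
`Lf = ⟨∇f, J∇E⟩ + ⟨∇f, K∇S⟩ + div(K∇f)`. -/
theorem expS_stationary_of_divJ_zero {d : ℕ}
    (E S : (Fin d → ℝ) → ℝ)
    (J K : (Fin d → ℝ) → Matrix (Fin d) (Fin d) ℝ)
    (hE : ContDiff ℝ (⊤ : ℕ∞) E) (hS : ContDiff ℝ (⊤ : ℕ∞) S)
    (hJ : ∀ i j, ContDiff ℝ (⊤ : ℕ∞) fun x => J x i j)
    (hK : ∀ i j, ContDiff ℝ (⊤ : ℕ∞) fun x => K x i j)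
    (hJanti : ∀ x, (J x)ᵀ = -J x)
    (hJS : ∀ x, (J x).mulVec (grad S x) = 0)
    (hKsym : ∀ x, (K x)ᵀ = K x)
    (hKE : ∀ x, (K x).mulVec (grad E x) = 0)
    (hdivJ : ∀ (j : Fin d) (x : Fin d → ℝ), ∑ k, pd k (fun y => J y j k) x = 0)
    (f : (Fin d → ℝ) → ℝ)
    (hf : ContDiff ℝ (⊤ : ℕ∞) f) (hfc : HasCompactSupport f) :
    ∫ x, (grad f x ⬝ᵥ (J x).mulVec (grad E x)
          + grad f x ⬝ᵥ (K x).mulVec (grad S x)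
          + vdiv (fun y => (K y).mulVec (grad f y)) x) * Real.exp (S x) = 0 := by
  classical
  -- differentiability facts
  have hEpd : ∀ k, ContDiff ℝ (⊤:ℕ∞) (pd k E) := fun k => contDiff_pd k hE
  have hSpd : ∀ k, ContDiff ℝ (⊤:ℕ∞) (pd k S) := fun k => contDiff_pd k hS
  have hfpd : ∀ k, ContDiff ℝ (⊤:ℕ∞) (pd k f) := fun k => contDiff_pd k hf
  have hdiff : ∀ {u : (Fin d → ℝ) → ℝ}, ContDiff ℝ (⊤:ℕ∞) u →
      ∀ x : Fin d → ℝ, DifferentiableAt ℝ u x := fun hu x =>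
    (hu.differentiable (by simp)) x
  -- antisymmetry / symmetry entrywise
  have hJA : ∀ (y : Fin d → ℝ) (i j : Fin d), J y j i = -(J y i j) := by
    intro y i j
    have := congrFun (congrFun (hJanti y) i) j
    simpa [Matrix.transpose_apply, Matrix.neg_apply] using this
  have hKS : ∀ (y : Fin d → ℝ) (i j : Fin d), K y j i = K y i j := by
    intro y i j
    have := congrFun (congrFun (hKsym y) i) j
    simpa [Matrix.transpose_apply] using this
  -- the vector field whose divergence is the integrand
  set P : Fin d → (Fin d → ℝ) → ℝ :=
    fun j y => f y * (∑ k, J y j k * pd k E y) + ∑ k, K y j k * pd k f y with hPdef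
  set X : Fin d → (Fin d → ℝ) → ℝ := fun j y => Real.exp (S y) * P j y with hXdef
  have hPC : ∀ j, ContDiff ℝ (⊤:ℕ∞) (P j) := fun j =>
    (hf.mul (ContDiff.sum fun k _ => (hJ j k).mul (hEpd k))).add
      (ContDiff.sum fun k _ => (hK j k).mul (hfpd k))
  have hXC : ∀ j, ContDiff ℝ (⊤:ℕ∞) (X j) := fun j => hS.exp.mul (hPC j)
  have hXsupp : ∀ j, HasCompactSupport (X j) := by
    intro j
    apply HasCompactSupport.intro hfc
    intro y hy
    have hf0 : f y = 0 := image_eq_zero_of_notMem_tsupport hy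
    have hdf0 : ∀ k, pd k f y = 0 := by
      intro k; simp [pd, fderiv_of_notMem_tsupport (𝕜 := ℝ) hy]
    simp [hXdef, hPdef, hf0, hdf0]
  -- pointwise identity: integrand * e^S = divergence of X
  have key : ∀ x, (grad f x ⬝ᵥ (J x).mulVec (grad E x)
          + grad f x ⬝ᵥ (K x).mulVec (grad S x)
          + vdiv (fun y => (K y).mulVec (grad f y)) x) * Real.exp (S x)
        = ∑ j, pd j (X j) x := by
    intro x
    -- compute each pd j (X j) x
    have hXj : ∀ j, pd j (X j) x
        = Real.exp (S x) * pd j S x * P j x + Real.exp (S x) * pd j (P j) x := by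
      intro j
      have := pd_mul (u := fun y => Real.exp (S y)) (v := P j) (x := x) j
        (hdiff hS.exp x) (hdiff (hPC j) x)
      simp only [hXdef] at this ⊢
      rw [this, pd_exp j (hdiff hS x)]
    have hPj : ∀ j, pd j (P j) x
        = pd j f x * (∑ k, J x j k * pd k E x)
          + f x * (∑ k, (pd j (fun y => J y j k) x * pd k E x
                          + J x j k * pd j (pd k E) x))
          + ∑ k, (pd j (fun y => K y j k) x * pd k f x
                          + K x j k * pd j (pd k f) x) := by
      intro j
      have h1 : pd j (P j) x
          = pd j (fun y => f y * (∑ k, J y j k * pd k E y)) x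
            + pd j (fun y => ∑ k, K y j k * pd k f y) x := by
        simp only [hPdef]
        exact pd_add j
          ((hdiff hf x).mul (hdiff (ContDiff.sum fun k _ => (hJ j k).mul (hEpd k)) x))
          (hdiff (ContDiff.sum fun k _ => (hK j k).mul (hfpd k)) x)
      have h2 : pd j (fun y => f y * (∑ k, J y j k * pd k E y)) x
          = pd j f x * (∑ k, J x j k * pd k E x)
            + f x * (∑ k, (pd j (fun y => J y j k) x * pd k E x
                          + J x j k * pd j (pd k E) x)) := by
        rw [pd_mul j (hdiff hf x)
          (hdiff (ContDiff.sum fun k _ => (hJ j k).mul (hEpd k)) x)]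
        congr 2
        rw [pd_sum Finset.univ (u := fun k y => J y j k * pd k E y) j
          (fun k _ => (hdiff (hJ j k) x).mul (hdiff (hEpd k) x))]
        exact Finset.sum_congr rfl fun k _ =>
          pd_mul j (hdiff (hJ j k) x) (hdiff (hEpd k) x)
      have h3 : pd j (fun y => ∑ k, K y j k * pd k f y) x
          = ∑ k, (pd j (fun y => K y j k) x * pd k f x + K x j k * pd j (pd k f) x) := by
        rw [pd_sum Finset.univ (u := fun k y => K y j k * pd k f y) j
          (fun k _ => (hdiff (hK j k) x).mul (hdiff (hfpd k) x))]
        exact Finset.sum_congr rfl fun k _ =>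
          pd_mul j (hdiff (hK j k) x) (hdiff (hfpd k) x)
      rw [h1, h2, h3]
    -- vanishing identities
    have hcolJ : ∀ k, ∑ j, J x j k * pd j S x = 0 := by
      intro k
      have h0 : (J x).mulVec (grad S x) k = 0 := by rw [hJS x]; rfl
      have : ∑ j, J x j k * pd j S x = -∑ j, J x k j * grad S x j := by
        rw [← Finset.sum_neg_distrib]
        exact Finset.sum_congr rfl fun j _ => by
          rw [hJA x k j, grad_eq_pd]; ring
      rw [this]
      simpa [Matrix.mulVec, dotProduct] using congrArg Neg.neg h0
    have C1 : ∑ j, pd j S x * (∑ k, J x j k * pd k E x) = 0 := by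
      have : ∑ j, pd j S x * (∑ k, J x j k * pd k E x)
          = ∑ k, (∑ j, J x j k * pd j S x) * pd k E x := by
        simp only [Finset.mul_sum, Finset.sum_mul]
        rw [Finset.sum_comm]
        exact Finset.sum_congr rfl fun k _ => Finset.sum_congr rfl fun j _ => by ring
      rw [this]
      simp [hcolJ]
    have C2 : ∑ j, pd j S x * (∑ k, K x j k * pd k f x)
        = grad f x ⬝ᵥ (K x).mulVec (grad S x) := by
      simp only [dotProduct, Matrix.mulVec, grad_eq_pd, Finset.mul_sum]
      rw [Finset.sum_comm]
      exact Finset.sum_congr rfl fun k _ => Finset.sum_congr rfl fun j _ => by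
        rw [hKS x k j]; ring
    have C3 : ∑ j, pd j f x * (∑ k, J x j k * pd k E x)
        = grad f x ⬝ᵥ (J x).mulVec (grad E x) := by
      simp only [dotProduct, Matrix.mulVec, grad_eq_pd]
    have C4 : ∀ k, ∑ j, pd j (fun y => J y j k) x = 0 := by
      intro k
      have : ∑ j, pd j (fun y => J y j k) x = -∑ j, pd j (fun y => J y k j) x := by
        rw [← Finset.sum_neg_distrib]
        refine Finset.sum_congr rfl fun j _ => ?_
        have hfun : (fun y => J y j k) = fun y => -(J y k j) := by
          funext y; rw [hJA y k j]
        rw [hfun, pd_neg]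
      rw [this, hdivJ k x, neg_zero]
    have C5 : ∑ j, ∑ k, J x j k * pd j (pd k E) x = 0 := by
      set T := ∑ j, ∑ k, J x j k * pd j (pd k E) x with hT
      have : T = -T := by
        calc T = ∑ k, ∑ j, J x j k * pd j (pd k E) x := Finset.sum_comm
        _ = ∑ k, ∑ j, -(J x k j * pd k (pd j E) x) := by
            exact Finset.sum_congr rfl fun k _ => Finset.sum_congr rfl fun j _ => by
              rw [hJA x k j, pd_pd_symm hE j k]; ring
        _ = -T := by rw [hT]; simp [Finset.sum_neg_distrib]
      linarith
    have C6 : (∑ j, ∑ k, pd j (fun y => K y j k) x * pd k f x)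
          + (∑ j, ∑ k, K x j k * pd j (pd k f) x)
        = vdiv (fun y => (K y).mulVec (grad f y)) x := by
      rw [← Finset.sum_add_distrib]
      simp only [← Finset.sum_add_distrib]
      simp only [vdiv]
      refine Finset.sum_congr rfl fun j _ => ?_
      have hfun : (fun y => (K y).mulVec (grad f y) j) = fun y => ∑ k, K y j k * pd k f y := by
        funext y; simp [Matrix.mulVec, dotProduct, grad_eq_pd]
      have : fderiv ℝ (fun y => (K y).mulVec (grad f y) j) x (Pi.single j 1)
          = pd j (fun y => ∑ k, K y j k * pd k f y) x := by
        rw [pd]; exact congrFun (congrArg _ (congrArg (fun g => fderiv ℝ g x) hfun)) _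
      rw [this, pd_sum Finset.univ (u := fun k y => K y j k * pd k f y) j
          (fun k _ => (hdiff (hK j k) x).mul (hdiff (hfpd k) x))]
      exact (Finset.sum_congr rfl fun k _ =>
        pd_mul j (hdiff (hK j k) x) (hdiff (hfpd k) x)).symm
    -- auxiliary zero sums
    have hz1 : ∑ j, f x * ∑ k, pd j (fun y => J y j k) x * pd k E x = 0 := by
      have h0 : ∑ j, ∑ k, pd j (fun y => J y j k) x * pd k E x = 0 := by
        rw [Finset.sum_comm]
        refine Finset.sum_eq_zero fun k _ => ?_
        rw [← Finset.sum_mul, C4 k, zero_mul]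
      rw [← Finset.mul_sum, h0, mul_zero]
    have hz2 : ∑ j, f x * ∑ k, J x j k * pd j (pd k E) x = 0 := by
      rw [← Finset.mul_sum, C5, mul_zero]
    -- assemble the two sums
    have hs1 : ∑ j, pd j S x * P j x = grad f x ⬝ᵥ (K x).mulVec (grad S x) := by
      have hexp : ∀ j, pd j S x * P j x
          = f x * (pd j S x * (∑ k, J x j k * pd k E x))
            + pd j S x * (∑ k, K x j k * pd k f x) := by
        intro j; simp only [hPdef]; ring
      rw [Finset.sum_congr rfl fun j _ => hexp j, Finset.sum_add_distrib,
        ← Finset.mul_sum, C1, mul_zero, zero_add, C2]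
    have hs2 : ∑ j, pd j (P j) x
        = grad f x ⬝ᵥ (J x).mulVec (grad E x)
          + vdiv (fun y => (K y).mulVec (grad f y)) x := by
      rw [Finset.sum_congr rfl fun j _ => hPj j]
      simp only [Finset.sum_add_distrib, mul_add]
      rw [C3, hz1, hz2, C6]
      ring
    have hRHS : ∑ j, pd j (X j) x
        = Real.exp (S x) * (∑ j, pd j S x * P j x + ∑ j, pd j (P j) x) := by
      rw [mul_add, Finset.mul_sum, Finset.mul_sum, ← Finset.sum_add_distrib]
      exact Finset.sum_congr rfl fun j _ => by rw [hXj j]; ring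
    rw [hRHS, hs1, hs2]
    ring
  -- integrate
  have hint : ∀ j, Integrable (fun x => pd j (X j) x) := by
    intro j
    exact ((contDiff_pd j (hXC j)).continuous).integrable_of_hasCompactSupport
      ((hXsupp j).fderiv_apply ℝ (Pi.single j 1))
  calc ∫ x, (grad f x ⬝ᵥ (J x).mulVec (grad E x)
          + grad f x ⬝ᵥ (K x).mulVec (grad S x)
          + vdiv (fun y => (K y).mulVec (grad f y)) x) * Real.exp (S x)
      = ∫ x, ∑ j, pd j (X j) x := by
        exact integral_congr_ae (Filter.Eventually.of_forall key)
    _ = ∑ j, ∫ x, pd j (X j) x := integral_finset_sum _ fun j _ => hint j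
    _ = 0 := by
        refine Finset.sum_eq_zero fun j _ => ?_
        exact integral_pd_eq_zero (hXC j) (hXsupp j) j
end

section
/- Let m : ℝ^d → (0,∞) be a smooth positive density, E, S : ℝ^d → ℝ smooth, and J : ℝ^d → Mat(d,ℝ) smooth with J(x) antisymmetric and J(x)∇S(x) = 0 for all x, satisfying the unimodularity condition div(m J∇g) = 0 for every smooth g. Then the operator L_a f := ⟨∇E, J∇f⟩ is antisymmetric on L²(ℝ^d; e^{S} m dx): for all smooth compactly supported f, h : ℝ^d → ℝ, ∫_{ℝ^d} h(x) ⟨∇E(x), J(x)∇f(x)⟩ e^{S(x)} m(x) dx = − ∫_{ℝ^d} f(x) ⟨∇E(x), J(x)∇h(x)⟩ e^{S(x)} m(x) dx. -/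
open MeasureTheory Real Matrix

lemma integral_dderiv_eq_zero {d : ℕ} {u : (Fin d → ℝ) → ℝ} (hu : ContDiff ℝ (⊤:ℕ∞) u)
    (huc : HasCompactSupport u) (v : Fin d → ℝ) :
    ∫ x, fderiv ℝ u x v = 0 := by
  have hud : Differentiable ℝ u := hu.differentiable (by simp)
  have hcont : Continuous fun x => fderiv ℝ u x v :=
    ((hu.fderiv_right (m := (⊤:ℕ∞)) (by exact_mod_cast le_top)).continuous).clm_apply
      continuous_const
  have hcs : HasCompactSupport fun x => fderiv ℝ u x v := huc.fderiv_apply ℝ v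
  have h1 : ∫ x, (fun _ : Fin d → ℝ => (1:ℝ)) x * fderiv ℝ u x v
      = - ∫ x, fderiv ℝ (fun _ : Fin d → ℝ => (1:ℝ)) x v * u x := by
    apply integral_mul_fderiv_eq_neg_fderiv_mul_of_integrable
    · simpa [fderiv_fun_const] using (integrable_zero _ _ (volume : Measure (Fin d → ℝ)))
    · simpa using hcont.integrable_of_hasCompactSupport hcs
    · simpa using (hu.continuous.integrable_of_hasCompactSupport huc)
    · exact fun x _ => differentiableAt_const _
    · exact fun x _ => hud x
  simpa [fderiv_fun_const] using h1

lemma grad_contDiff {d : ℕ} {E : (Fin d → ℝ) → ℝ} (hE : ContDiff ℝ (⊤:ℕ∞) E) (j : Fin d) :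
    ContDiff ℝ (⊤:ℕ∞) fun x => grad E x j :=
  ((hE.fderiv_right (m := (⊤:ℕ∞)) (by exact_mod_cast le_top)).clm_apply contDiff_const)

lemma dot_contDiff {d : ℕ} {E f : (Fin d → ℝ) → ℝ} {J : (Fin d → ℝ) → Matrix (Fin d) (Fin d) ℝ}
    (hE : ContDiff ℝ (⊤:ℕ∞) E) (hJ : ∀ i j, ContDiff ℝ (⊤:ℕ∞) fun x => J x i j)
    (hf : ContDiff ℝ (⊤:ℕ∞) f) :
    ContDiff ℝ (⊤:ℕ∞) fun x => grad E x ⬝ᵥ (J x).mulVec (grad f x) := by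
  have : (fun x => grad E x ⬝ᵥ (J x).mulVec (grad f x))
      = fun x => ∑ k, grad E x k * ∑ j, J x k j * grad f x j := by
    funext x; simp [dotProduct, Matrix.mulVec]
  rw [this]
  exact ContDiff.sum fun k _ => (grad_contDiff hE k).mul
    (ContDiff.sum fun j _ => (hJ k j).mul (grad_contDiff hf j))

lemma anti_dot {d : ℕ} (J : Matrix (Fin d) (Fin d) ℝ) (hJ : Jᵀ = -J) (u w : Fin d → ℝ) :
    u ⬝ᵥ J.mulVec w = -(w ⬝ᵥ J.mulVec u) := by
  rw [Matrix.dotProduct_mulVec, ← Matrix.mulVec_transpose, hJ, Matrix.neg_mulVec,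
    neg_dotProduct, dotProduct_comm]

lemma div_formula {d : ℕ}
    (m : (Fin d → ℝ) → ℝ) (E S : (Fin d → ℝ) → ℝ)
    (J : (Fin d → ℝ) → Matrix (Fin d) (Fin d) ℝ)
    (hm : ContDiff ℝ (⊤ : ℕ∞) m)
    (hE : ContDiff ℝ (⊤ : ℕ∞) E) (hS : ContDiff ℝ (⊤ : ℕ∞) S)
    (hJ : ∀ i j, ContDiff ℝ (⊤ : ℕ∞) fun x => J x i j)
    (hJanti : ∀ x, (J x)ᵀ = -J x)
    (hJS : ∀ x, (J x).mulVec (grad S x) = 0)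
    (huni : ∀ g : (Fin d → ℝ) → ℝ, ContDiff ℝ (⊤ : ℕ∞) g →
      ∀ x, vdiv (fun y k => m y * (J y).mulVec (grad g y) k) x = 0)
    (f h : (Fin d → ℝ) → ℝ)
    (hf : ContDiff ℝ (⊤ : ℕ∞) f) (hh : ContDiff ℝ (⊤ : ℕ∞) h) (x : Fin d → ℝ) :
    vdiv (fun y k => f y * h y * Real.exp (S y) * (m y * (J y).mulVec (grad E y) k)) x
      = -(h x * (grad E x ⬝ᵥ (J x).mulVec (grad f x)) * (Real.exp (S x) * m x)
          + f x * (grad E x ⬝ᵥ (J x).mulVec (grad h x)) * (Real.exp (S x) * m x)) := by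
  have hfd : DifferentiableAt ℝ f x := (hf.differentiable (by simp)).differentiableAt
  have hhd : DifferentiableAt ℝ h x := (hh.differentiable (by simp)).differentiableAt
  have hSd : DifferentiableAt ℝ S x := (hS.differentiable (by simp)).differentiableAt
  have hφd : DifferentiableAt ℝ (fun y => f y * h y * Real.exp (S y)) x :=
    (hfd.mul hhd).mul hSd.exp
  have hY : ∀ k, ContDiff ℝ (⊤:ℕ∞) (fun y => m y * (J y).mulVec (grad E y) k) := by
    intro k
    have hrw : (fun y => m y * (J y).mulVec (grad E y) k)
        = fun y => m y * ∑ j, J y k j * grad E y j := by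
      funext y; simp [Matrix.mulVec, dotProduct]
    rw [hrw]
    exact hm.mul (ContDiff.sum fun j _ => (hJ k j).mul (grad_contDiff hE j))
  have hYd : ∀ k, DifferentiableAt ℝ (fun y => m y * (J y).mulVec (grad E y) k) x :=
    fun k => ((hY k).differentiable (by simp)).differentiableAt
  -- split the divergence with the product rule
  have hsplit : ∀ k : Fin d,
      fderiv ℝ (fun y => f y * h y * Real.exp (S y) * (m y * (J y).mulVec (grad E y) k)) x
          (Pi.single k 1)
      = (f x * h x * Real.exp (S x))
          * fderiv ℝ (fun y => m y * (J y).mulVec (grad E y) k) x (Pi.single k 1)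
        + (m x * (J x).mulVec (grad E x) k)
          * fderiv ℝ (fun y => f y * h y * Real.exp (S y)) x (Pi.single k 1) := by
    intro k
    rw [fderiv_fun_mul hφd (hYd k)]
    simp [smul_eq_mul]
  -- derivative of the scalar factor
  have hG : ∀ v : Fin d → ℝ,
      fderiv ℝ (fun y => f y * h y * Real.exp (S y)) x v
      = Real.exp (S x) * (f x * fderiv ℝ h x v + h x * fderiv ℝ f x v)
        + f x * h x * Real.exp (S x) * fderiv ℝ S x v := by
    intro v
    rw [fderiv_fun_mul (show DifferentiableAt ℝ (fun y => f y * h y) x from hfd.mul hhd) hSd.exp, fderiv_exp hSd, fderiv_fun_mul hfd hhd]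
    simp [smul_eq_mul]
    ring
  have h0 := huni E hE x
  simp only [vdiv] at h0 ⊢
  rw [Finset.sum_congr rfl fun k _ => hsplit k, Finset.sum_add_distrib, ← Finset.mul_sum, h0,
    mul_zero, zero_add]
  -- now compute the remaining sum
  have hWf : grad f x ⬝ᵥ (J x).mulVec (grad E x) = -(grad E x ⬝ᵥ (J x).mulVec (grad f x)) :=
    anti_dot (J x) (hJanti x) _ _
  have hWh : grad h x ⬝ᵥ (J x).mulVec (grad E x) = -(grad E x ⬝ᵥ (J x).mulVec (grad h x)) :=
    anti_dot (J x) (hJanti x) _ _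
  have hWS : grad S x ⬝ᵥ (J x).mulVec (grad E x) = 0 := by
    rw [anti_dot (J x) (hJanti x), hJS x, dotProduct_zero, neg_zero]
  have expand : ∑ k, (m x * (J x).mulVec (grad E x) k)
        * fderiv ℝ (fun y => f y * h y * Real.exp (S y)) x (Pi.single k 1)
      = (Real.exp (S x) * f x * m x) * (grad h x ⬝ᵥ (J x).mulVec (grad E x))
        + (Real.exp (S x) * h x * m x) * (grad f x ⬝ᵥ (J x).mulVec (grad E x))
        + (f x * h x * Real.exp (S x) * m x) * (grad S x ⬝ᵥ (J x).mulVec (grad E x)) := by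
    simp only [dotProduct, Finset.mul_sum, ← Finset.sum_add_distrib]
    refine Finset.sum_congr rfl fun k _ => ?_
    rw [hG]
    simp only [grad]
    ring
  rw [expand, hWf, hWh, hWS]
  ring

/-- the Hamiltonian part `L_a f = ⟨∇E, J∇f⟩` of the GENERIC generator
is antisymmetric on `L²(ℝ^d; e^S m dx)`. -/
theorem hamiltonian_part_antisymmetric {d : ℕ}
    (m : (Fin d → ℝ) → ℝ) (E S : (Fin d → ℝ) → ℝ)
    (J : (Fin d → ℝ) → Matrix (Fin d) (Fin d) ℝ)
    (hm : ContDiff ℝ (⊤ : ℕ∞) m) (hmpos : ∀ x, 0 < m x)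
    (hE : ContDiff ℝ (⊤ : ℕ∞) E) (hS : ContDiff ℝ (⊤ : ℕ∞) S)
    (hJ : ∀ i j, ContDiff ℝ (⊤ : ℕ∞) fun x => J x i j)
    (hJanti : ∀ x, (J x)ᵀ = -J x)
    (hJS : ∀ x, (J x).mulVec (grad S x) = 0)
    (huni : ∀ g : (Fin d → ℝ) → ℝ, ContDiff ℝ (⊤ : ℕ∞) g →
      ∀ x, vdiv (fun y k => m y * (J y).mulVec (grad g y) k) x = 0)
    (f h : (Fin d → ℝ) → ℝ)
    (hf : ContDiff ℝ (⊤ : ℕ∞) f) (hfc : HasCompactSupport f)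
    (hh : ContDiff ℝ (⊤ : ℕ∞) h) (hhc : HasCompactSupport h) :
    ∫ x, h x * (grad E x ⬝ᵥ (J x).mulVec (grad f x)) * (Real.exp (S x) * m x)
      = - ∫ x, f x * (grad E x ⬝ᵥ (J x).mulVec (grad h x)) * (Real.exp (S x) * m x) := by

  -- smoothness of the components of the vector field X
  have hY : ∀ k, ContDiff ℝ (⊤:ℕ∞) (fun y => m y * (J y).mulVec (grad E y) k) := by
    intro k
    have hrw : (fun y => m y * (J y).mulVec (grad E y) k)
        = fun y => m y * ∑ j, J y k j * grad E y j := by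
      funext y; simp [Matrix.mulVec, dotProduct]
    rw [hrw]
    exact hm.mul (ContDiff.sum fun j _ => (hJ k j).mul (grad_contDiff hE j))
  have hXcd : ∀ k, ContDiff ℝ (⊤:ℕ∞)
      (fun y => f y * h y * Real.exp (S y) * (m y * (J y).mulVec (grad E y) k)) :=
    fun k => ((hf.mul hh).mul hS.exp).mul (hY k)
  have hXcs : ∀ k, HasCompactSupport
      (fun y => f y * h y * Real.exp (S y) * (m y * (J y).mulVec (grad E y) k)) := by
    intro k
    apply hfc.mono
    intro y hy
    simp only [Function.mem_support] at hy ⊢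
    intro h0
    exact hy (by simp [h0])
  -- the integral of the divergence vanishes
  have hzero : ∫ x, vdiv
      (fun y k => f y * h y * Real.exp (S y) * (m y * (J y).mulVec (grad E y) k)) x = 0 := by
    simp only [vdiv]
    rw [integral_finset_sum]
    · exact Finset.sum_eq_zero fun k _ => integral_dderiv_eq_zero (hXcd k) (hXcs k) _
    · intro k _
      have hcont : Continuous fun x =>
          fderiv ℝ (fun y => f y * h y * Real.exp (S y) * (m y * (J y).mulVec (grad E y) k)) x
            (Pi.single k 1) :=
        (((hXcd k).fderiv_right (m := (⊤:ℕ∞)) (by exact_mod_cast le_top)).continuous).clm_apply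
          continuous_const
      exact hcont.integrable_of_hasCompactSupport ((hXcs k).fderiv_apply ℝ _)
  -- integrability of the two integrands
  have hI1c : Continuous fun x =>
      h x * (grad E x ⬝ᵥ (J x).mulVec (grad f x)) * (Real.exp (S x) * m x) :=
    (hh.continuous.mul (dot_contDiff hE hJ hf).continuous).mul
      (hS.exp.continuous.mul hm.continuous)
  have hI2c : Continuous fun x =>
      f x * (grad E x ⬝ᵥ (J x).mulVec (grad h x)) * (Real.exp (S x) * m x) :=
    (hf.continuous.mul (dot_contDiff hE hJ hh).continuous).mul
      (hS.exp.continuous.mul hm.continuous)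
  have hI1cs : HasCompactSupport fun x =>
      h x * (grad E x ⬝ᵥ (J x).mulVec (grad f x)) * (Real.exp (S x) * m x) := by
    apply hhc.mono
    intro y hy
    simp only [Function.mem_support] at hy ⊢
    intro h0
    exact hy (by simp [h0])
  have hI2cs : HasCompactSupport fun x =>
      f x * (grad E x ⬝ᵥ (J x).mulVec (grad h x)) * (Real.exp (S x) * m x) := by
    apply hfc.mono
    intro y hy
    simp only [Function.mem_support] at hy ⊢
    intro h0
    exact hy (by simp [h0])
  have hI1 : Integrable _ (volume : Measure (Fin d → ℝ)) := hI1c.integrable_of_hasCompactSupport hI1cs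
  have hI2 : Integrable _ (volume : Measure (Fin d → ℝ)) := hI2c.integrable_of_hasCompactSupport hI2cs
  -- pointwise divergence identity
  have hpt := div_formula m E S J hm hE hS hJ hJanti hJS huni f h hf hh
  rw [funext hpt] at hzero
  rw [integral_neg, integral_add hI1 hI2, neg_eq_zero] at hzero
  linarith
end
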